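/- There do not exist finitely many pairs of polynomials $a_i,b_i\in\mathbb{R}[x,y]$ such that simultaneously $\sum_i a_i^2=1+x^2$, $\sum_i b_i^2=x^2+y^4$, and $\sum_i a_ib_i=xy$. -/

import Mathlib

open MvPolynomial

set_option maxHeartbeats 800000

private def phiA (m : Fin 2 →₀ ℕ) : ℕ ×ₗ ℕ := toLex (m 0 + 2 * m 1, m 1)
private def phiB (m : Fin 2 →₀ ℕ) : ℕ ×ₗ ℕ := toLex (2 * m 0 + m 1, m 1)

private lemma fin2_ext {m n : Fin 2 →₀ ℕ} (h0 : m 0 = n 0) (h1 : m 1 = n 1) : m = n := by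
  ext a
  fin_cases a
  · exact h0
  · exact h1

private lemma phiA_add (m n : Fin 2 →₀ ℕ) : phiA (m + n) = phiA m + phiA n := by
  show toLex ((m + n) 0 + 2 * (m + n) 1, (m + n) 1)
      = toLex (m 0 + 2 * m 1 + (n 0 + 2 * n 1), m 1 + n 1)
  rw [Finsupp.add_apply, Finsupp.add_apply]
  congr 1
  · ring_nf
private lemma phiA_inj : Function.Injective phiA := by
  intro m n h
  have h1 : m 0 + 2 * m 1 = n 0 + 2 * n 1 := congrArg (fun p => (ofLex p).1) h
  have h2 : m 1 = n 1 := congrArg (fun p => (ofLex p).2) h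
  exact fin2_ext (by omega) h2

private lemma phiB_add (m n : Fin 2 →₀ ℕ) : phiB (m + n) = phiB m + phiB n := by
  show toLex (2 * (m + n) 0 + (m + n) 1, (m + n) 1)
      = toLex (2 * m 0 + m 1 + (2 * n 0 + n 1), m 1 + n 1)
  rw [Finsupp.add_apply, Finsupp.add_apply]
  congr 1
  · ring_nf
private lemma phiB_inj : Function.Injective phiB := by
  intro m n h
  have h1 : 2 * m 0 + m 1 = 2 * n 0 + n 1 := congrArg (fun p => (ofLex p).1) h
  have h2 : m 1 = n 1 := congrArg (fun p => (ofLex p).2) h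
  exact fin2_ext (by omega) h2

private lemma lex_le_decode {x1 x2 y1 y2 : ℕ} (h : toLex (x1, x2) ≤ toLex (y1, y2)) :
    x1 < y1 ∨ (x1 = y1 ∧ x2 ≤ y2) :=
  Prod.Lex.le_iff.1 h

private lemma sos_support {k : ℕ} (a : Fin k → MvPolynomial (Fin 2) ℝ)
    (q : MvPolynomial (Fin 2) ℝ) (h : ∑ i, (a i) ^ 2 = q)
    (φ : (Fin 2 →₀ ℕ) → ℕ ×ₗ ℕ)
    (hadd : ∀ m n, φ (m + n) = φ m + φ n) (hinj : Function.Injective φ)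
    {i : Fin k} {m : Fin 2 →₀ ℕ} (hm : m ∈ (a i).support) :
    ∃ s ∈ q.support, φ m + φ m ≤ φ s := by
  classical
  set T : Finset (Fin 2 →₀ ℕ) := Finset.univ.biUnion (fun j => (a j).support) with hT
  have hmT : m ∈ T := Finset.mem_biUnion.2 ⟨i, Finset.mem_univ _, hm⟩
  obtain ⟨M, hMT, hMmax⟩ := T.exists_max_image φ ⟨m, hmT⟩
  have key : ∀ j : Fin k, coeff (M + M) ((a j) ^ 2) = (coeff M (a j)) ^ 2 := by
    intro j
    rw [sq, coeff_mul, Finset.sum_eq_single (M, M)]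
    · exact (sq _).symm
    · rintro ⟨p₁, p₂⟩ hp hne
      rw [Finset.HasAntidiagonal.mem_antidiagonal] at hp
      by_contra hc
      have h1 : coeff p₁ (a j) ≠ 0 := fun h0 => hc (by simp [h0])
      have h2 : coeff p₂ (a j) ≠ 0 := fun h0 => hc (by simp [h0])
      have l1 : φ p₁ ≤ φ M :=
        hMmax _ (Finset.mem_biUnion.2 ⟨j, Finset.mem_univ _, MvPolynomial.mem_support_iff.2 h1⟩)
      have l2 : φ p₂ ≤ φ M :=
        hMmax _ (Finset.mem_biUnion.2 ⟨j, Finset.mem_univ _, MvPolynomial.mem_support_iff.2 h2⟩)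
      have hsum : φ p₁ + φ p₂ = φ M + φ M := by rw [← hadd, ← hadd, hp]
      have e1 : φ p₁ = φ M := by
        by_contra hne1
        exact absurd hsum (ne_of_lt (add_lt_add_of_lt_of_le (lt_of_le_of_ne l1 hne1) l2))
      have e2 : φ p₂ = φ M := by
        rw [e1] at hsum
        exact add_left_cancel hsum
      exact hne (by rw [hinj e1, hinj e2])
    · intro habs
      simp [Finset.mem_antidiagonal] at habs
  have hco : coeff (M + M) q ≠ 0 := by
    rw [← h, coeff_sum]
    simp only [key]
    obtain ⟨j0, _, hj0⟩ := Finset.mem_biUnion.1 hMT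
    have hj0' : coeff M (a j0) ≠ 0 := MvPolynomial.mem_support_iff.1 hj0
    intro h0
    have := (Finset.sum_eq_zero_iff_of_nonneg (fun j _ => sq_nonneg (coeff M (a j)))).1 h0
      j0 (Finset.mem_univ _)
    exact hj0' (pow_eq_zero_iff two_ne_zero |>.1 this)
  refine ⟨M + M, MvPolynomial.mem_support_iff.2 hco, ?_⟩
  rw [hadd]
  exact add_le_add (hMmax _ hmT) (hMmax _ hmT)

theorem stmt_10 :
    ¬ ∃ (k : ℕ) (a b : Fin k → MvPolynomial (Fin 2) ℝ),
        (∑ i, (a i) ^ 2 = 1 + (X 0 : MvPolynomial (Fin 2) ℝ) ^ 2) ∧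
        (∑ i, (b i) ^ 2 = (X 0 : MvPolynomial (Fin 2) ℝ) ^ 2 + (X 1) ^ 4) ∧
        (∑ i, a i * b i = (X 0 : MvPolynomial (Fin 2) ℝ) * X 1) := by
  classical
  rintro ⟨k, a, b, h1, h2, h3⟩
  -- supports of the right-hand sides
  have support_q1 : ∀ s : Fin 2 →₀ ℕ,
      s ∈ (1 + (X 0 : MvPolynomial (Fin 2) ℝ) ^ 2).support →
      s = 0 ∨ s = Finsupp.single 0 2 := by
    intro s hs
    by_contra hc
    push_neg at hc
    have hco := MvPolynomial.mem_support_iff.1 hs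
    have hn1 : (0 : Fin 2 →₀ ℕ) ≠ s := fun h => hc.1 h.symm
    have hn2 : Finsupp.single (0 : Fin 2) 2 ≠ s := fun h => hc.2 h.symm
    rw [coeff_add, coeff_one, coeff_X_pow, if_neg hn1, if_neg hn2] at hco
    exact hco (by ring_nf)
  have support_q2 : ∀ s : Fin 2 →₀ ℕ,
      s ∈ ((X 0 : MvPolynomial (Fin 2) ℝ) ^ 2 + (X 1) ^ 4).support →
      s = Finsupp.single 0 2 ∨ s = Finsupp.single 1 4 := by
    intro s hs
    by_contra hc
    push_neg at hc
    have hco := MvPolynomial.mem_support_iff.1 hs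
    have hn1 : Finsupp.single (0 : Fin 2) 2 ≠ s := fun h => hc.1 h.symm
    have hn2 : Finsupp.single (1 : Fin 2) 4 ≠ s := fun h => hc.2 h.symm
    rw [coeff_add, coeff_X_pow, coeff_X_pow, if_neg hn1, if_neg hn2] at hco
    exact hco (by ring_nf)
  -- shape of the a's
  have hA : ∀ i : Fin k, ∀ m ∈ (a i).support, m = 0 ∨ m = Finsupp.single 0 1 := by
    intro i m hm
    obtain ⟨s, hs, hle⟩ := sos_support a _ h1 phiA phiA_add phiA_inj hm
    have hL : phiA m + phiA m
        = toLex (m 0 + 2 * m 1 + (m 0 + 2 * m 1), m 1 + m 1) := rfl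
    have hnum : (m 0 = 0 ∧ m 1 = 0) ∨ (m 0 = 1 ∧ m 1 = 0) := by
      rcases support_q1 s hs with rfl | rfl
      · have hs0 : phiA (0 : Fin 2 →₀ ℕ) = toLex (0, 0) := rfl
        rw [hL, hs0] at hle
        rcases lex_le_decode hle with h | ⟨h, h'⟩ <;> omega
      · have hs0 : phiA (Finsupp.single (0 : Fin 2) 2) = toLex (2, 0) := by
          show toLex ((Finsupp.single (0 : Fin 2) 2) 0 + 2 * (Finsupp.single (0 : Fin 2) 2) 1,
            (Finsupp.single (0 : Fin 2) 2) 1) = toLex (2, 0)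
          simp [Finsupp.single_apply]
        rw [hL, hs0] at hle
        rcases lex_le_decode hle with h | ⟨h, h'⟩ <;> omega
    rcases hnum with ⟨e0, e1⟩ | ⟨e0, e1⟩
    · exact Or.inl (fin2_ext (by simpa using e0) (by simpa using e1))
    · refine Or.inr (fin2_ext ?_ ?_) <;> simp [Finsupp.single_apply, e0, e1]
  -- shape of the b's
  have hB : ∀ i : Fin k, ∀ m ∈ (b i).support,
      m = 0 ∨ m = Finsupp.single 1 1 ∨ m = Finsupp.single 0 1 ∨ m = Finsupp.single 1 2 := by
    intro i m hm
    obtain ⟨s, hs, hle⟩ := sos_support b _ h2 phiB phiB_add phiB_inj hm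
    have hL : phiB m + phiB m
        = toLex (2 * m 0 + m 1 + (2 * m 0 + m 1), m 1 + m 1) := rfl
    have hnum : (m 0 = 0 ∧ m 1 = 0) ∨ (m 0 = 0 ∧ m 1 = 1) ∨ (m 0 = 1 ∧ m 1 = 0) ∨
        (m 0 = 0 ∧ m 1 = 2) := by
      rcases support_q2 s hs with rfl | rfl
      · have hs0 : phiB (Finsupp.single (0 : Fin 2) 2) = toLex (4, 0) := by
          show toLex (2 * (Finsupp.single (0 : Fin 2) 2) 0 + (Finsupp.single (0 : Fin 2) 2) 1,
            (Finsupp.single (0 : Fin 2) 2) 1) = toLex (4, 0)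
          simp [Finsupp.single_apply]
        rw [hL, hs0] at hle
        rcases lex_le_decode hle with h | ⟨h, h'⟩ <;> omega
      · have hs0 : phiB (Finsupp.single (1 : Fin 2) 4) = toLex (4, 4) := by
          show toLex (2 * (Finsupp.single (1 : Fin 2) 4) 0 + (Finsupp.single (1 : Fin 2) 4) 1,
            (Finsupp.single (1 : Fin 2) 4) 1) = toLex (4, 4)
          simp [Finsupp.single_apply]
        rw [hL, hs0] at hle
        rcases lex_le_decode hle with h | ⟨h, h'⟩ <;> omega
    rcases hnum with ⟨e0, e1⟩ | ⟨e0, e1⟩ | ⟨e0, e1⟩ | ⟨e0, e1⟩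
    · exact Or.inl (fin2_ext (by simpa using e0) (by simpa using e1))
    · refine Or.inr (Or.inl (fin2_ext ?_ ?_)) <;> simp [Finsupp.single_apply, e0, e1]
    · refine Or.inr (Or.inr (Or.inl (fin2_ext ?_ ?_))) <;> simp [Finsupp.single_apply, e0, e1]
    · refine Or.inr (Or.inr (Or.inr (fin2_ext ?_ ?_))) <;> simp [Finsupp.single_apply, e0, e1]
  -- the constant coefficients of the b's vanish
  have hBc : ∀ i : Fin k, coeff 0 (b i) = 0 := by
    have hs : ∑ i, (constantCoeff (b i)) ^ 2 = 0 := by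
      have := congrArg constantCoeff h2
      rw [map_sum] at this
      simpa using this
    intro i
    have := (Finset.sum_eq_zero_iff_of_nonneg
      (fun j _ => sq_nonneg (constantCoeff (b j)))).1 hs i (Finset.mem_univ _)
    exact pow_eq_zero_iff two_ne_zero |>.1 this
  -- the y-coefficients of the b's vanish
  have hBy : ∀ i : Fin k, coeff (Finsupp.single 1 1) (b i) = 0 := by
    have hy2 : coeff (Finsupp.single 1 2) (∑ i, (b i) ^ 2) = 0 := by
      rw [h2, coeff_add, coeff_X_pow, coeff_X_pow]
      rw [if_neg, if_neg]
      · ring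
      · intro h
        have := congrArg (fun f => f 1) h
        simp [Finsupp.single_apply] at this
      · intro h
        have := congrArg (fun f => f 0) h
        simp [Finsupp.single_apply] at this
    have key2 : ∀ j : Fin k, coeff (Finsupp.single 1 2) ((b j) ^ 2)
        = (coeff (Finsupp.single 1 1) (b j)) ^ 2 := by
      intro j
      rw [sq, coeff_mul, Finset.sum_eq_single (Finsupp.single 1 1, Finsupp.single 1 1)]
      · exact (sq _).symm
      · rintro ⟨p₁, p₂⟩ hp hne
        rw [Finset.HasAntidiagonal.mem_antidiagonal] at hp
        by_contra hc
        have hc1 : coeff p₁ (b j) ≠ 0 := fun h0 => hc (by simp [h0])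
        have hc2 : coeff p₂ (b j) ≠ 0 := fun h0 => hc (by simp [h0])
        rcases hB j p₁ (MvPolynomial.mem_support_iff.2 hc1) with rfl | rfl | rfl | rfl
        · exact hc1 (hBc j)
        · have hp2 : p₂ = Finsupp.single 1 1 := by
            have h12 : (Finsupp.single (1 : Fin 2) 2)
                = Finsupp.single (1 : Fin 2) 1 + Finsupp.single (1 : Fin 2) 1 := by
              rw [← Finsupp.single_add]
            rw [h12] at hp
            exact add_left_cancel hp
          exact hne (by rw [hp2])
        · have := congrArg (fun f => f 0) hp
          simp [Finsupp.add_apply, Finsupp.single_apply] at this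
        · have hp2 : p₂ = 0 := by
            have := hp
            rwa [add_eq_left] at this
          exact hc2 (hp2 ▸ hBc j)
      · intro habs
        exfalso
        apply habs
        rw [Finset.HasAntidiagonal.mem_antidiagonal]
        show Finsupp.single (1 : Fin 2) 1 + Finsupp.single (1 : Fin 2) 1
            = Finsupp.single (1 : Fin 2) 2
        rw [← Finsupp.single_add]
    rw [coeff_sum] at hy2
    simp only [key2] at hy2
    intro i
    have := (Finset.sum_eq_zero_iff_of_nonneg
      (fun j _ => sq_nonneg (coeff (Finsupp.single 1 1) (b j)))).1 hy2 i (Finset.mem_univ _)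
    exact pow_eq_zero_iff two_ne_zero |>.1 this
  -- final contradiction via the coefficient of X*Y
  have hxy : coeff (Finsupp.single 0 1 + Finsupp.single 1 1) (∑ i, a i * b i) = 1 := by
    rw [h3]
    have : (X 0 : MvPolynomial (Fin 2) ℝ) * X 1
        = monomial (Finsupp.single 0 1 + Finsupp.single 1 1) 1 := by
      rw [X, X, monomial_mul, one_mul]
    rw [this, coeff_monomial, if_pos rfl]
  have hzero : coeff (Finsupp.single 0 1 + Finsupp.single 1 1) (∑ i, a i * b i) = 0 := by
    rw [coeff_sum]
    apply Finset.sum_eq_zero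
    intro j _
    rw [coeff_mul]
    apply Finset.sum_eq_zero
    rintro ⟨p₁, p₂⟩ hp
    rw [Finset.HasAntidiagonal.mem_antidiagonal] at hp
    by_contra hc
    have hc1 : coeff p₁ (a j) ≠ 0 := fun h0 => hc (by simp [h0])
    have hc2 : coeff p₂ (b j) ≠ 0 := fun h0 => hc (by simp [h0])
    rcases hA j p₁ (MvPolynomial.mem_support_iff.2 hc1) with rfl | rfl
    · rw [zero_add] at hp
      rcases hB j p₂ (MvPolynomial.mem_support_iff.2 hc2) with rfl | rfl | rfl | rfl
      · have := congrArg (fun f => f 0) hp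
        simp [Finsupp.add_apply, Finsupp.single_apply] at this
      · have := congrArg (fun f => f 0) hp
        simp [Finsupp.add_apply, Finsupp.single_apply] at this
      · have := congrArg (fun f => f 1) hp
        simp [Finsupp.add_apply, Finsupp.single_apply] at this
      · have := congrArg (fun f => f 0) hp
        simp [Finsupp.add_apply, Finsupp.single_apply] at this
    · have hp2 : p₂ = Finsupp.single 1 1 := add_left_cancel hp
      exact hc2 (hp2 ▸ hBy j)
  rw [hzero] at hxy
  exact zero_ne_one hxy
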